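/- Let p ∈ ℂ satisfy p⁶ = −45p. Then: (i) σ(p,0,1) = 0; (ii) the partial derivative σ₁(p,0,1) = p⁶·(2/15) − p²·0 + 1, equals 1 if p = 0 and equals −5 if p ≠ 0; in particular σ₁(p,0,1) ≠ 0; (iii) there exist an open neighborhood U ⊆ ℂ² of the point (0,1) and a holomorphic (complex-analytic) function φ : U → ℂ such that φ(0,1) = p and σ(φ(w₃,w₅),w₃,w₅) = 0 for all (w₃,w₅) ∈ U. -/

import Mathlib

/- Context: the Schur–Weierstrass polynomial
σ(w₁,w₃,w₅) = w₁w₅ − w₃² − (1/3)w₁³w₃ + (1/45)w₁⁶, with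
σ₁(w₁,w₃,w₅) = ∂σ/∂w₁ = w₅ − w₁²w₃ + (2/15)w₁⁵. -/

noncomputable section

def sg (w1 w3 w5 : ℂ) : ℂ :=
  w1 * w5 - w3 ^ 2 - (1 / 3) * w1 ^ 3 * w3 + (1 / 45) * w1 ^ 6

def sg1 (w1 w3 w5 : ℂ) : ℂ :=
  w5 - w1 ^ 2 * w3 + (2 / 15) * w1 ^ 5

abbrev P3 := ℂ × ℂ × ℂ

/-- The big map `G(w₁,w₃,w₅) = (σ(w₁,w₃,w₅), w₃, w₅)`. -/
def bigG (w : P3) : P3 := (sg w.1 w.2.1 w.2.2, w.2)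

open ContinuousLinearMap in
/-- The linear map `(x,y,z) ↦ (Ax+By+Cz, y, z)`. -/
def Mfwd (A B C : ℂ) : P3 →L[ℂ] P3 :=
  (A • ContinuousLinearMap.fst ℂ ℂ (ℂ × ℂ)
    + B • (ContinuousLinearMap.fst ℂ ℂ ℂ).comp (ContinuousLinearMap.snd ℂ ℂ (ℂ × ℂ))
    + C • (ContinuousLinearMap.snd ℂ ℂ ℂ).comp (ContinuousLinearMap.snd ℂ ℂ (ℂ × ℂ))).prod
    (ContinuousLinearMap.snd ℂ ℂ (ℂ × ℂ))

lemma Mfwd_apply (A B C : ℂ) (v : P3) :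
    Mfwd A B C v = (A * v.1 + B * v.2.1 + C * v.2.2, v.2) := by
  simp [Mfwd]

/-- The invertible version of `Mfwd` when `A ≠ 0`. -/
def Mequiv (A B C : ℂ) (hA : A ≠ 0) : P3 ≃L[ℂ] P3 :=
  ContinuousLinearEquiv.equivOfInverse (Mfwd A B C) (Mfwd A⁻¹ (-(A⁻¹ * B)) (-(A⁻¹ * C)))
    (fun v => by
      simp only [Mfwd_apply]
      refine Prod.ext ?_ rfl
      field_simp
      ring)
    (fun v => by
      simp only [Mfwd_apply]
      refine Prod.ext ?_ rfl
      field_simp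
      ring)

lemma Mequiv_coe (A B C : ℂ) (hA : A ≠ 0) :
    ((Mequiv A B C hA : P3 ≃L[ℂ] P3) : P3 →L[ℂ] P3) = Mfwd A B C := rfl

lemma bigG_hasFDerivAt (w : P3) :
    HasFDerivAt bigG (Mfwd (sg1 w.1 w.2.1 w.2.2) (-2 * w.2.1 - (1/3) * w.1 ^ 3) w.1) w := by
  have h1 : HasFDerivAt (fun w : P3 => w.1) (ContinuousLinearMap.fst ℂ ℂ (ℂ × ℂ)) w :=
    hasFDerivAt_fst
  have h3 : HasFDerivAt (fun w : P3 => w.2.1)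
      ((ContinuousLinearMap.fst ℂ ℂ ℂ).comp (ContinuousLinearMap.snd ℂ ℂ (ℂ × ℂ))) w :=
    hasFDerivAt_fst.comp w hasFDerivAt_snd
  have h5 : HasFDerivAt (fun w : P3 => w.2.2)
      ((ContinuousLinearMap.snd ℂ ℂ ℂ).comp (ContinuousLinearMap.snd ℂ ℂ (ℂ × ℂ))) w :=
    hasFDerivAt_snd.comp w hasFDerivAt_snd
  have h2 : HasFDerivAt (fun w : P3 => w.2) (ContinuousLinearMap.snd ℂ ℂ (ℂ × ℂ)) w :=
    hasFDerivAt_snd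
  have hg : HasFDerivAt (fun w : P3 =>
      w.1 * w.2.2 - w.2.1 * w.2.1 - ((1/45 : ℂ) * 15) * (w.1 * (w.1 * w.1)) * w.2.1
        + (1/45 : ℂ) * (w.1 * (w.1 * (w.1 * (w.1 * (w.1 * w.1)))))) _ w :=
    (((h1.mul h5).sub (h3.mul h3)).sub
      ((((h1.mul (h1.mul h1)).const_mul ((1/45 : ℂ) * 15))).mul h3)).add
      ((h1.mul (h1.mul (h1.mul (h1.mul (h1.mul h1))))).const_mul (1/45 : ℂ))
  have heq : (fun w : P3 => sg w.1 w.2.1 w.2.2) = (fun w : P3 =>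
      w.1 * w.2.2 - w.2.1 * w.2.1 - ((1/45 : ℂ) * 15) * (w.1 * (w.1 * w.1)) * w.2.1
        + (1/45 : ℂ) * (w.1 * (w.1 * (w.1 * (w.1 * (w.1 * w.1)))))) := by
    funext w
    simp only [sg]
    ring
  have hfirst : HasFDerivAt (fun w : P3 => sg w.1 w.2.1 w.2.2) _ w := heq ▸ hg
  have := hfirst.prodMk h2
  refine HasFDerivAt.congr_fderiv this ?_
  refine ContinuousLinearMap.ext fun v => Prod.ext ?_ rfl
  simp only [Mfwd_apply, ContinuousLinearMap.prod_apply, ContinuousLinearMap.add_apply,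
    ContinuousLinearMap.sub_apply, ContinuousLinearMap.smul_apply, ContinuousLinearMap.comp_apply,
    ContinuousLinearMap.coe_fst', ContinuousLinearMap.coe_snd', smul_eq_mul, sg1, Pi.mul_apply, Pi.pow_apply]
  ring

lemma bigG_analyticAt (w : P3) : AnalyticAt ℂ bigG w := by
  have h1 : AnalyticAt ℂ (fun w : P3 => w.1) w := analyticAt_fst
  have h3 : AnalyticAt ℂ (fun w : P3 => w.2.1) w := analyticAt_fst.comp analyticAt_snd
  have h5 : AnalyticAt ℂ (fun w : P3 => w.2.2) w := analyticAt_snd.comp analyticAt_snd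
  exact ((((h1.mul h5).sub (h3.pow 2)).sub
      ((analyticAt_const.mul (h1.pow 3)).mul h3)).add
      (analyticAt_const.mul (h1.pow 6))).prod analyticAt_snd

/-- For `p ∈ ℂ` with `p⁶ = −45p`: (i) `σ(p,0,1) = 0`; (ii) `σ₁(p,0,1) =
(2/15)p⁵ − p²·0 + 1`, which is `1` if `p = 0` and `−5` if `p ≠ 0`, and in particular
`σ₁(p,0,1) ≠ 0`; (iii) there are an open neighborhood `U ⊆ ℂ²` of `(0,1)` and a
holomorphic function `φ` on `U` with `φ(0,1) = p` and `σ(φ(w₃,w₅),w₃,w₅) = 0`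
on `U`. -/
theorem statement15 (p : ℂ) (hp : p ^ 6 = -45 * p) :
    sg p 0 1 = 0 ∧
    sg1 p 0 1 = (2 / 15) * p ^ 5 - p ^ 2 * 0 + 1 ∧
    (p = 0 → sg1 p 0 1 = 1) ∧
    (p ≠ 0 → sg1 p 0 1 = -5) ∧
    sg1 p 0 1 ≠ 0 ∧
    ∃ U : Set (ℂ × ℂ), IsOpen U ∧ (0, 1) ∈ U ∧
      ∃ φ : ℂ × ℂ → ℂ, AnalyticOnNhd ℂ φ U ∧ φ (0, 1) = p ∧
        ∀ q ∈ U, sg (φ q) q.1 q.2 = 0 := by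
  have hsg : sg p 0 1 = 0 := by
    simp only [sg]
    rw [hp]; ring
  have hcase : p = 0 ∨ p ^ 5 = -45 := by
    rcases eq_or_ne p 0 with h | h
    · exact Or.inl h
    · right
      have : p ^ 5 * p = -45 * p := by rw [← hp]; ring
      exact mul_right_cancel₀ h this
  have hsg1val : sg1 p 0 1 = (2 / 15) * p ^ 5 - p ^ 2 * 0 + 1 := by
    simp only [sg1]; ring
  have hzero : p = 0 → sg1 p 0 1 = 1 := by
    intro h; simp [sg1, h]
  have hne : p ≠ 0 → sg1 p 0 1 = -5 := by
    intro h
    rcases hcase with h0 | h5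
    · exact absurd h0 h
    · simp only [sg1, h5]; ring
  have hsg1ne : sg1 p 0 1 ≠ 0 := by
    rcases eq_or_ne p 0 with h | h
    · rw [hzero h]; exact one_ne_zero
    · rw [hne h]; norm_num
  refine ⟨hsg, hsg1val, hzero, hne, hsg1ne, ?_⟩
  -- Implicit function theorem part
  set a : P3 := (p, 0, 1) with ha
  have hAa : sg1 a.1 a.2.1 a.2.2 ≠ 0 := hsg1ne
  set i := Mequiv (sg1 a.1 a.2.1 a.2.2) (-2 * a.2.1 - (1/3) * a.1 ^ 3) a.1 hAa with hi
  have hstrict : HasStrictFDerivAt bigG (i : P3 →L[ℂ] P3) a := by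
    obtain ⟨q, hq⟩ := bigG_analyticAt a
    have h1 := hq.hasStrictFDerivAt
    have h2 : continuousMultilinearCurryFin1 ℂ P3 P3 (q 1) = (i : P3 →L[ℂ] P3) :=
      h1.hasFDerivAt.unique (bigG_hasFDerivAt a)
    rwa [h2] at h1
  set f := hstrict.toOpenPartialHomeomorph bigG with hf
  have hfcoe : (f : P3 → P3) = bigG := hstrict.toOpenPartialHomeomorph_coe
  have hasrc : a ∈ f.source := hstrict.mem_toOpenPartialHomeomorph_source
  have hfa : f a = bigG a := by rw [hfcoe]
  have hGa : bigG a = ((0 : ℂ), ((0 : ℂ), (1 : ℂ))) := by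
    simp [bigG, ha, hsg]
  -- the good set
  set S : Set P3 := {w | sg1 w.1 w.2.1 w.2.2 ≠ 0} with hS
  have hSopen : IsOpen S := by
    have hcont : Continuous fun w : P3 => sg1 w.1 w.2.1 w.2.2 := by
      unfold sg1; fun_prop
    exact isOpen_compl_singleton.preimage hcont
  set V : Set P3 := f.target ∩ f.symm ⁻¹' S with hV
  have hVopen : IsOpen V := f.symm.isOpen_inter_preimage hSopen
  set U : Set (ℂ × ℂ) := (fun q : ℂ × ℂ => ((0 : ℂ), q)) ⁻¹' V with hU
  have hUopen : IsOpen U := hVopen.preimage (by fun_prop)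
  have hmemV : ((0 : ℂ), ((0 : ℂ), (1 : ℂ))) ∈ V := by
    rw [← hGa, ← hfa]
    constructor
    · exact f.map_source hasrc
    · show f.symm (f a) ∈ S
      rw [f.left_inv hasrc]
      exact hAa
  have hmemU : ((0 : ℂ), (1 : ℂ)) ∈ U := hmemV
  set φ : ℂ × ℂ → ℂ := fun q => (f.symm ((0 : ℂ), q)).1 with hφ
  refine ⟨U, hUopen, hmemU, φ, ?_, ?_, ?_⟩
  · -- analyticity
    intro q hq
    have hb : ((0 : ℂ), q) ∈ f.target := hq.1
    have hbS : f.symm ((0 : ℂ), q) ∈ S := hq.2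
    have hA' : sg1 (f.symm ((0 : ℂ), q)).1 (f.symm ((0 : ℂ), q)).2.1
        (f.symm ((0 : ℂ), q)).2.2 ≠ 0 := hbS
    set w := f.symm ((0 : ℂ), q) with hw
    have hsymm : AnalyticAt ℂ f.symm ((0 : ℂ), q) := by
      refine f.analyticAt_symm hb ?_ (i := Mequiv _ (-2 * w.2.1 - (1/3) * w.1 ^ 3) w.1 hA') ?_
      · rw [hfcoe]; exact bigG_analyticAt _
      · rw [hfcoe]
        exact (bigG_hasFDerivAt w).fderiv
    have hinner : AnalyticAt ℂ (fun q : ℂ × ℂ => ((0 : ℂ), q)) q :=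
      analyticAt_const.prod analyticAt_id
    exact analyticAt_fst.comp (hsymm.comp hinner)
  · -- φ (0,1) = p
    show (f.symm ((0 : ℂ), ((0 : ℂ), (1 : ℂ)))).1 = p
    rw [← hGa, ← hfa, f.left_inv hasrc]
  · -- zero locus
    intro q hq
    have hb : ((0 : ℂ), q) ∈ f.target := hq.1
    have hright : f (f.symm ((0 : ℂ), q)) = ((0 : ℂ), q) := f.right_inv hb
    rw [hfcoe] at hright
    set w := f.symm ((0 : ℂ), q) with hw
    have h1 : sg w.1 w.2.1 w.2.2 = 0 := congrArg Prod.fst hright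
    have h2 : w.2 = q := congrArg Prod.snd hright
    show sg w.1 q.1 q.2 = 0
    rw [← h2]
    exact h1

end
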